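/- The set P_{t_i} of probability measures μ on X × T satisfying μ([φ]) ≥ θ ⟺ B_i^θ φ ∈ t_i (for all formulas φ and all θ ∈ Θ) is nonempty: the function μ_{i,ω}([φ]) := Pr_i(ω)([[φ]]_M), where d_i(ω) = t_i, is a well-defined pre-measure on the algebra {[φ] : φ ∈ L_B^Θ} and extends by Carathéodory's theorem to a probability measure in P_{t_i}. -/

import Mathlib

open MeasureTheory ENNReal

/-- The language `L_B^Θ`: primitive propositions, negation, conjunction, and belief
operators `B_i^θ` for `θ ∈ Θ`. -/
inductive Formula (Φ I : Type*) (Θ : Set ℝ≥0∞) : Type _ where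
  | prim : Φ → Formula Φ I Θ
  | neg : Formula Φ I Θ → Formula Φ I Θ
  | conj : Formula Φ I Θ → Formula Φ I Θ → Formula Φ I Θ
  | bel : I → Θ → Formula Φ I Θ → Formula Φ I Θ

/-- Truth sets of formulas in a probability model `(Ω, (Pr_i), π)`. -/
def sem {Ω Φ I : Type*} {Θ : Set ℝ≥0∞} [MeasurableSpace Ω]
    (Pr : I → Ω → Measure Ω) (π : Φ → Set Ω) : Formula Φ I Θ → Set Ω
  | .prim p => π p
  | .neg φ => (sem Pr π φ)ᶜ
  | .conj φ ψ => sem Pr π φ ∩ sem Pr π ψ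
  | .bel i θ φ => {ω | (θ : ℝ≥0∞) ≤ Pr i ω (sem Pr π φ)}

/-- A probability model: a measurable space of worlds, measurable introspective belief
functions `Pr_i : Ω → Δ(Ω)`, and an interpretation `π` of primitive propositions. -/
structure ProbModel (Φ : Type) (n : ℕ) (Θ : Set ℝ≥0∞) where
  Ω : Type
  ms : MeasurableSpace Ω
  Pr : Fin n → Ω → @Measure Ω ms
  prob : ∀ i ω, IsProbabilityMeasure (Pr i ω)
  measPr : ∀ i (E : Set Ω) (θ : ℝ≥0∞), MeasurableSet[ms] E →
    MeasurableSet[ms] {ω | θ ≤ Pr i ω E}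
  π : Φ → Set Ω
  measπ : ∀ p, MeasurableSet[ms] (π p)
  introspect : ∀ i ω,
    (⨅ (E : Set Ω) (_ : {ω' | Pr i ω' = Pr i ω} ⊆ E) (_ : MeasurableSet[ms] E), Pr i ω E) = 1

/-- Truth sets in a (bundled) probability model. -/
def ProbModel.sem {Φ : Type} {n : ℕ} {Θ : Set ℝ≥0∞} (M : ProbModel Φ n Θ) :
    Formula Φ (Fin n) Θ → Set M.Ω :=
  @_root_.sem M.Ω Φ (Fin n) Θ M.ms M.Pr M.π

/-- Purely propositional formulas: Boolean combinations of primitive propositions. -/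
inductive IsProp {Φ I : Type*} {Θ : Set ℝ≥0∞} : Formula Φ I Θ → Prop where
  | prim (p : Φ) : IsProp (.prim p)
  | neg {φ} : IsProp φ → IsProp (.neg φ)
  | conj {φ ψ} : IsProp φ → IsProp ψ → IsProp (.conj φ ψ)

/-- `i`-formulas: Boolean combinations of formulas of the form `B_i^θ ψ`. -/
inductive IsIFormula {Φ I : Type*} {Θ : Set ℝ≥0∞} (i : I) : Formula Φ I Θ → Prop where
  | bel (θ : Θ) (φ : Formula Φ I Θ) : IsIFormula i (.bel i θ φ)
  | neg {φ} : IsIFormula i φ → IsIFormula i (.neg φ)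
  | conj {φ ψ} : IsIFormula i φ → IsIFormula i ψ → IsIFormula i (.conj φ ψ)

/-- The `0`-description of a world: all purely propositional formulas true at it. -/
def d0 {Φ : Type} {n : ℕ} {Θ : Set ℝ≥0∞} (M : ProbModel Φ n Θ) (ω : M.Ω) :
    Set (Formula Φ (Fin n) Θ) :=
  {φ | IsProp φ ∧ ω ∈ M.sem φ}

/-- The `i`-description of a world: all `i`-formulas true at it. -/
def di {Φ : Type} {n : ℕ} {Θ : Set ℝ≥0∞} (M : ProbModel Φ n Θ) (i : Fin n) (ω : M.Ω) :
    Set (Formula Φ (Fin n) Θ) :=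
  {φ | IsIFormula i φ ∧ ω ∈ M.sem φ}

/-- `ω` satisfies every formula in `S`. -/
def SatAll {Φ : Type} {n : ℕ} {Θ : Set ℝ≥0∞} (M : ProbModel Φ n Θ) (ω : M.Ω)
    (S : Set (Formula Φ (Fin n) Θ)) : Prop :=
  ∀ φ ∈ S, ω ∈ M.sem φ

/-- Semantic entailment: every world of every probability model satisfying all of `S`
satisfies `φ`. -/
def Entails {Φ : Type} {n : ℕ} {Θ : Set ℝ≥0∞} (S : Set (Formula Φ (Fin n) Θ))
    (φ : Formula Φ (Fin n) Θ) : Prop :=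
  ∀ (M : ProbModel Φ n Θ) (ω : M.Ω), SatAll M ω S → ω ∈ M.sem φ

/-- A description: a satisfiable and maximal set of formulas. -/
def IsDescription {Φ : Type} {n : ℕ} {Θ : Set ℝ≥0∞} (D : Set (Formula Φ (Fin n) Θ)) : Prop :=
  (∃ (M : ProbModel Φ n Θ) (ω : M.Ω), SatAll M ω D) ∧
    ∀ φ : Formula Φ (Fin n) Θ, φ ∈ D ∨ Formula.neg φ ∈ D

variable {Φ : Type} {n : ℕ} {Θ : Set ℝ≥0∞}

/-- The space `X` of 0-descriptions arising from worlds of `M`. -/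
def Desc0 (M : ProbModel Φ n Θ) : Type :=
  {x : Set (Formula Φ (Fin n) Θ) // ∃ ω : M.Ω, x = d0 M ω}

/-- The space `T_i` of `i`-descriptions arising from worlds of `M`. -/
def DescI (M : ProbModel Φ n Θ) (i : Fin n) : Type :=
  {t : Set (Formula Φ (Fin n) Θ) // ∃ ω : M.Ω, t = di M i ω}

/-- `E_0(φ) = {x : φ ∈ x}`. -/
def E0 (M : ProbModel Φ n Θ) (φ : Formula Φ (Fin n) Θ) : Set (Desc0 M) :=
  {x | φ ∈ x.1}

/-- `E_i(φ) = {t_i : φ ∈ t_i}`. -/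
def Ei (M : ProbModel Φ n Θ) (i : Fin n) (φ : Formula Φ (Fin n) Θ) : Set (DescI M i) :=
  {t | φ ∈ t.1}

instance (M : ProbModel Φ n Θ) : MeasurableSpace (Desc0 M) :=
  MeasurableSpace.generateFrom {s | ∃ φ, s = E0 M φ}

instance (M : ProbModel Φ n Θ) (i : Fin n) : MeasurableSpace (DescI M i) :=
  MeasurableSpace.generateFrom {s | ∃ φ, s = Ei M i φ}

/-- `[φ] = {(x,t) : φ ∈ D(x,t)}`, where `D(x,t)` is the unique description extending
`x ∪ ⋃_i t_i`; membership in `D(x,t)` is equivalently expressed by entailment. -/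
def brack (M : ProbModel Φ n Θ) (φ : Formula Φ (Fin n) Θ) :
    Set (Desc0 M × ∀ i, DescI M i) :=
  {q | Entails (q.1.1 ∪ ⋃ i : Fin n, (q.2 i).1) φ}

section Aux

instance instMSOmega (M : ProbModel Φ n Θ) : MeasurableSpace M.Ω := M.ms

lemma measSem (M : ProbModel Φ n Θ) : ∀ φ : Formula Φ (Fin n) Θ, MeasurableSet (M.sem φ)
  | .prim p => M.measπ p
  | .neg φ => (measSem M φ).compl
  | .conj φ ψ => (measSem M φ).inter (measSem M ψ)
  | .bel j θ φ => M.measPr j _ θ (measSem M φ)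

/-! ### The product model used to witness consistency of arbitrary `(x, t)` pairs. -/

def eM (M : ProbModel Φ n Θ) : M.Ω → M.Ω × (Fin n → M.Ω) := fun w => (w, fun _ => w)

lemma measurable_eM (M : ProbModel Φ n Θ) : Measurable (eM M) :=
  measurable_id.prodMk (measurable_pi_lambda _ fun _ => measurable_id)

noncomputable def bigModel (M : ProbModel Φ n Θ) : ProbModel Φ n Θ where
  Ω := M.Ω × (Fin n → M.Ω)
  ms := inferInstance
  Pr := fun j q => (M.Pr j (q.2 j)).map (eM M)
  prob := fun j q => by
    haveI := M.prob j (q.2 j)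
    exact Measure.isProbabilityMeasure_map (measurable_eM M).aemeasurable
  measPr := by
    intro j E θ hE
    have h1 : {q : M.Ω × (Fin n → M.Ω) | θ ≤ (M.Pr j (q.2 j)).map (eM M) E}
        = (fun q : M.Ω × (Fin n → M.Ω) => q.2 j) ⁻¹' {w | θ ≤ M.Pr j w (eM M ⁻¹' E)} := by
      ext q
      simp [Measure.map_apply (measurable_eM M) hE]
    rw [h1]
    exact ((measurable_pi_apply j).comp measurable_snd)
      (M.measPr j _ θ (measurable_eM M hE))
  π := fun p => Prod.fst ⁻¹' M.π p
  measπ := fun p => measurable_fst (M.measπ p)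
  introspect := by
    intro j q
    apply le_antisymm
    · refine iInf_le_of_le Set.univ (iInf_le_of_le (Set.subset_univ _)
        (iInf_le_of_le MeasurableSet.univ ?_))
      haveI := M.prob j (q.2 j)
      haveI : IsProbabilityMeasure ((M.Pr j (q.2 j)).map (eM M)) :=
        Measure.isProbabilityMeasure_map (measurable_eM M).aemeasurable
      simp
    · refine le_iInf fun E => le_iInf fun hsub => le_iInf fun hE => ?_
      rw [Measure.map_apply (measurable_eM M) hE]
      have hK : {w | M.Pr j w = M.Pr j (q.2 j)} ⊆ eM M ⁻¹' E := by
        intro w hw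
        apply hsub
        show (M.Pr j ((eM M w).2 j)).map (eM M) = (M.Pr j (q.2 j)).map (eM M)
        have : (eM M w).2 j = w := rfl
        rw [this, hw]
      calc (1:ℝ≥0∞) = ⨅ (G : Set M.Ω) (_ : {w | M.Pr j w = M.Pr j (q.2 j)} ⊆ G)
            (_ : MeasurableSet G), M.Pr j (q.2 j) G := (M.introspect j (q.2 j)).symm
        _ ≤ M.Pr j (q.2 j) (eM M ⁻¹' E) :=
            iInf_le_of_le _ (iInf_le_of_le hK (iInf_le _ (measurable_eM M hE)))

lemma sem_eM (M : ProbModel Φ n Θ) :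
    ∀ φ : Formula Φ (Fin n) Θ, eM M ⁻¹' ((bigModel M).sem φ) = M.sem φ
  | .prim p => rfl
  | .neg φ => by
      show eM M ⁻¹' ((bigModel M).sem φ)ᶜ = (M.sem φ)ᶜ
      exact congrArg compl (sem_eM M φ)
  | .conj φ ψ => by
      show eM M ⁻¹' ((bigModel M).sem φ ∩ (bigModel M).sem ψ) = M.sem φ ∩ M.sem ψ
      exact congrArg₂ (· ∩ ·) (sem_eM M φ) (sem_eM M ψ)
  | .bel j θ φ => by
      ext w
      show (θ:ℝ≥0∞) ≤ (M.Pr j ((eM M w).2 j)).map (eM M) ((bigModel M).sem φ) ↔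
        (θ:ℝ≥0∞) ≤ M.Pr j w (M.sem φ)
      rw [Measure.map_apply (measurable_eM M) (measSem (bigModel M) φ), sem_eM M φ]
      rfl

lemma sem_prop (M : ProbModel Φ n Θ) {φ : Formula Φ (Fin n) Θ} (h : IsProp φ) :
    ∀ q : M.Ω × (Fin n → M.Ω), (q ∈ (bigModel M).sem φ ↔ q.1 ∈ M.sem φ) := by
  induction h with
  | prim p => intro q; exact Iff.rfl
  | neg _ ih =>
      intro q
      show q ∉ (bigModel M).sem _ ↔ q.1 ∉ M.sem _
      exact not_congr (ih q)
  | conj _ _ ih1 ih2 =>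
      intro q
      exact and_congr (ih1 q) (ih2 q)

lemma sem_iform (M : ProbModel Φ n Θ) {j : Fin n} {φ : Formula Φ (Fin n) Θ}
    (h : IsIFormula j φ) :
    ∀ q : M.Ω × (Fin n → M.Ω), (q ∈ (bigModel M).sem φ ↔ q.2 j ∈ M.sem φ) := by
  induction h with
  | bel θ ψ =>
      intro q
      show (θ:ℝ≥0∞) ≤ (M.Pr j (q.2 j)).map (eM M) ((bigModel M).sem ψ) ↔
        (θ:ℝ≥0∞) ≤ M.Pr j (q.2 j) (M.sem ψ)
      rw [Measure.map_apply (measurable_eM M) (measSem (bigModel M) ψ), sem_eM M ψ]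
  | neg _ ih =>
      intro q
      show q ∉ (bigModel M).sem _ ↔ q.2 j ∉ M.sem _
      exact not_congr (ih q)
  | conj _ _ ih1 ih2 =>
      intro q
      exact and_congr (ih1 q) (ih2 q)

lemma consistent (M : ProbModel Φ n Θ) (q : Desc0 M × ∀ j, DescI M j) :
    ∃ (N : ProbModel Φ n Θ) (ω'' : N.Ω),
      SatAll N ω'' (q.1.1 ∪ ⋃ j : Fin n, (q.2 j).1) := by
  obtain ⟨ω₀, h0⟩ := q.1.2
  choose w hw using fun j => (q.2 j).2
  refine ⟨bigModel M, (ω₀, w), ?_⟩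
  intro φ hφ
  rcases hφ with hx | ht
  · rw [h0] at hx
    exact (sem_prop M hx.1 _).mpr hx.2
  · rcases Set.mem_iUnion.mp ht with ⟨j, hj⟩
    rw [hw j] at hj
    exact (sem_iform M hj.1 _).mpr hj.2

/-! ### The measurable algebra sets `[φ]`. -/

def mset (M : ProbModel Φ n Θ) : Formula Φ (Fin n) Θ → Set (Desc0 M × ∀ j, DescI M j)
  | .prim p => {q | Formula.prim p ∈ q.1.1}
  | .neg φ => (mset M φ)ᶜ
  | .conj φ ψ => mset M φ ∩ mset M ψ
  | .bel j θ φ => {q | Formula.bel j θ φ ∈ (q.2 j).1}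

lemma measurable_mset (M : ProbModel Φ n Θ) :
    ∀ φ : Formula Φ (Fin n) Θ, MeasurableSet (mset M φ)
  | .prim p => by
      have h : MeasurableSet (E0 M (Formula.prim p)) :=
        MeasurableSpace.measurableSet_generateFrom ⟨Formula.prim p, rfl⟩
      exact measurable_fst h
  | .neg φ => (measurable_mset M φ).compl
  | .conj φ ψ => (measurable_mset M φ).inter (measurable_mset M ψ)
  | .bel j θ φ => by
      have h : MeasurableSet (Ei M j (Formula.bel j θ φ)) :=
        MeasurableSpace.measurableSet_generateFrom ⟨Formula.bel j θ φ, rfl⟩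
      exact ((measurable_pi_apply j).comp measurable_snd) h

lemma mem_brack_of_mem (M : ProbModel Φ n Θ) {q : Desc0 M × ∀ j, DescI M j}
    {φ : Formula Φ (Fin n) Θ} (h : φ ∈ q.1.1 ∪ ⋃ j : Fin n, (q.2 j).1) :
    q ∈ brack M φ :=
  fun _ _ hsat => hsat φ h

lemma mset_brack (M : ProbModel Φ n Θ) :
    ∀ (φ : Formula Φ (Fin n) Θ) (q : Desc0 M × ∀ j, DescI M j),
      (q ∈ mset M φ → q ∈ brack M φ) ∧ (q ∉ mset M φ → q ∈ brack M (.neg φ))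
  | .prim p, q => by
      constructor
      · intro h
        exact mem_brack_of_mem M (Or.inl h)
      · intro h
        obtain ⟨ω₀, h0⟩ := q.1.2
        refine mem_brack_of_mem M (Or.inl ?_)
        rw [h0]
        have hns : ω₀ ∉ M.sem (.prim p) := by
          intro hmem
          have hm : Formula.prim p ∈ q.1.1 := by
            rw [h0]; exact ⟨IsProp.prim p, hmem⟩
          exact h hm
        exact ⟨IsProp.neg (IsProp.prim p), hns⟩
  | .bel j θ ψ, q => by
      constructor
      · intro h
        exact mem_brack_of_mem M (Or.inr (Set.mem_iUnion.mpr ⟨j, h⟩))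
      · intro h
        obtain ⟨ωj, hj⟩ := (q.2 j).2
        refine mem_brack_of_mem M (Or.inr (Set.mem_iUnion.mpr ⟨j, ?_⟩))
        rw [hj]
        have hns : ωj ∉ M.sem (.bel j θ ψ) := by
          intro hmem
          have hm : Formula.bel j θ ψ ∈ (q.2 j).1 := by
            rw [hj]; exact ⟨IsIFormula.bel θ ψ, hmem⟩
          exact h hm
        exact ⟨IsIFormula.neg (IsIFormula.bel θ ψ), hns⟩
  | .neg φ, q => by
      constructor
      · intro h
        exact (mset_brack M φ q).2 h
      · intro h
        have hb : q ∈ brack M φ := (mset_brack M φ q).1 (not_not.mp h)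
        intro N ω'' hs
        have := hb N ω'' hs
        show ω'' ∉ (N.sem φ)ᶜ
        simpa using this
  | .conj φ ψ, q => by
      constructor
      · rintro ⟨h1, h2⟩
        have b1 := (mset_brack M φ q).1 h1
        have b2 := (mset_brack M ψ q).1 h2
        intro N ω'' hs
        exact ⟨b1 N ω'' hs, b2 N ω'' hs⟩
      · intro h
        rcases not_and_or.mp h with h1 | h2
        · have b1 := (mset_brack M φ q).2 h1
          intro N ω'' hs
          have : ω'' ∉ N.sem φ := b1 N ω'' hs
          show ω'' ∉ N.sem φ ∩ N.sem ψ
          exact fun hc => this hc.1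
        · have b2 := (mset_brack M ψ q).2 h2
          intro N ω'' hs
          have : ω'' ∉ N.sem ψ := b2 N ω'' hs
          show ω'' ∉ N.sem φ ∩ N.sem ψ
          exact fun hc => this hc.2

lemma brack_eq_mset (M : ProbModel Φ n Θ) (φ : Formula Φ (Fin n) Θ) :
    brack M φ = mset M φ := by
  ext q
  constructor
  · intro hb
    by_contra hm
    obtain ⟨N, ω'', hs⟩ := consistent M q
    exact ((mset_brack M φ q).2 hm N ω'' hs) (hb N ω'' hs)
  · intro hm
    exact (mset_brack M φ q).1 hm

/-! ### The canonical map `Ω → X × T`. -/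

def mkD0 (M : ProbModel Φ n Θ) (w : M.Ω) : Desc0 M := ⟨d0 M w, ⟨w, rfl⟩⟩

def mkDI (M : ProbModel Φ n Θ) (j : Fin n) (w : M.Ω) : DescI M j := ⟨di M j w, ⟨w, rfl⟩⟩

def toDesc (M : ProbModel Φ n Θ) : M.Ω → Desc0 M × ∀ j, DescI M j :=
  fun w => (mkD0 M w, fun j => mkDI M j w)

lemma measurable_mkD0 (M : ProbModel Φ n Θ) : Measurable (mkD0 M) := by
  apply measurable_generateFrom
  rintro s ⟨φ, rfl⟩
  have h1 : mkD0 M ⁻¹' E0 M φ = {w | IsProp φ ∧ w ∈ M.sem φ} := rfl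
  rw [h1]
  by_cases h : IsProp φ
  · have h2 : {w | IsProp φ ∧ w ∈ M.sem φ} = M.sem φ := by
      ext w; simp [h]
    rw [h2]; exact measSem M φ
  · have h2 : {w | IsProp φ ∧ w ∈ M.sem φ} = ∅ := by
      ext w; simp [h]
    rw [h2]; exact MeasurableSet.empty

lemma measurable_mkDI (M : ProbModel Φ n Θ) (j : Fin n) : Measurable (mkDI M j) := by
  apply measurable_generateFrom
  rintro s ⟨φ, rfl⟩
  have h1 : mkDI M j ⁻¹' Ei M j φ = {w | IsIFormula j φ ∧ w ∈ M.sem φ} := rfl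
  rw [h1]
  by_cases h : IsIFormula j φ
  · have h2 : {w | IsIFormula j φ ∧ w ∈ M.sem φ} = M.sem φ := by
      ext w; simp [h]
    rw [h2]; exact measSem M φ
  · have h2 : {w | IsIFormula j φ ∧ w ∈ M.sem φ} = ∅ := by
      ext w; simp [h]
    rw [h2]; exact MeasurableSet.empty

lemma measurable_toDesc (M : ProbModel Φ n Θ) : Measurable (toDesc M) := by
  apply Measurable.prodMk
  · exact measurable_mkD0 M
  · exact measurable_pi_lambda _ fun j => measurable_mkDI M j

lemma toDesc_mset (M : ProbModel Φ n Θ) :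
    ∀ φ : Formula Φ (Fin n) Θ, toDesc M ⁻¹' mset M φ = M.sem φ
  | .prim p => by
      ext w
      show Formula.prim p ∈ d0 M w ↔ w ∈ M.sem (.prim p)
      exact ⟨fun h => h.2, fun h => ⟨IsProp.prim p, h⟩⟩
  | .neg φ => by
      show toDesc M ⁻¹' (mset M φ)ᶜ = (M.sem φ)ᶜ
      rw [Set.preimage_compl, toDesc_mset M φ]
  | .conj φ ψ => by
      show toDesc M ⁻¹' (mset M φ ∩ mset M ψ) = M.sem φ ∩ M.sem ψ
      rw [Set.preimage_inter, toDesc_mset M φ, toDesc_mset M ψ]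
  | .bel j θ φ => by
      ext w
      show Formula.bel j θ φ ∈ di M j w ↔ w ∈ M.sem (.bel j θ φ)
      exact ⟨fun h => h.2, fun h => ⟨IsIFormula.bel θ φ, h⟩⟩

end Aux

/-- The set `P_{t_i}` is nonempty: there is a probability measure `μ` on `X × T` such
that for every formula `φ` and every `θ ∈ Θ`, `μ([φ]) ≥ θ` iff `B_i^θ φ ∈ t_i`
(where `t_i = d_i(ω)`). -/
theorem stmt16 (M : ProbModel Φ n Θ) (i : Fin n) (ω : M.Ω) :
    ∃ μ : Measure (Desc0 M × ∀ j, DescI M j), IsProbabilityMeasure μ ∧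
      ∀ (φ : Formula Φ (Fin n) Θ) (θ : Θ),
        ((θ : ℝ≥0∞) ≤ μ (brack M φ) ↔ Formula.bel i θ φ ∈ di M i ω) := by
  haveI := M.prob i ω
  refine ⟨(M.Pr i ω).map (toDesc M), Measure.isProbabilityMeasure_map (measurable_toDesc M).aemeasurable, ?_⟩
  intro φ θ
  have hval : (M.Pr i ω).map (toDesc M) (brack M φ) = M.Pr i ω (M.sem φ) := by
    rw [brack_eq_mset M φ, Measure.map_apply (measurable_toDesc M) (measurable_mset M φ),
      toDesc_mset M φ]
  rw [hval]
  constructor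
  · intro h
    exact ⟨IsIFormula.bel θ φ, h⟩
  · intro h
    exact h.2
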